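/- Let the dependency graph G = (V,E) be acyclic, Σ(i,i) = σ₁² for all i ∈ V, and Σ(i,j) = σ₁² g_{ij} with |g_{ij}| ≤ M < 1 for (i,j) ∈ E. Then the log-likelihood ratio log(p₀(y)/p₁(y)) between N(0,σ₀²I) and the GMRF N(0,Σ) equals n·log(σ₁/σ₀) + (1/2)[ (1/σ₁² − 1/σ₀²) Σ_{i∈V} y_i² + Σ_{(i,j)∈E, i<j} ( log(1−g_{ij}²) + (g_{ij}²/(1−g_{ij}²))·(y_i²+y_j²)/σ₁² − (2g_{ij}/(1−g_{ij}²))·y_i y_j/σ₁² ) ]. -/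

import Mathlib

open Matrix

/-- The (normalized) precision matrix of a GMRF with edge weights `c`. -/
noncomputable def precM {n : ℕ} (H : SimpleGraph (Fin n)) [DecidableRel H.Adj]
    (c : Fin n → Fin n → ℝ) : Matrix (Fin n) (Fin n) ℝ :=
  Matrix.of fun i j =>
    if i = j then 1 + ∑ k ∈ H.neighborFinset i, c i k ^ 2 / (1 - c i k ^ 2)
    else if H.Adj i j then -(c i j) / (1 - c i j ^ 2) else 0

private lemma exists_leaf {V : Type*} [Fintype V] {H : SimpleGraph V} (hac : H.IsAcyclic)
    {a b : V} (hab : H.Adj a b) : ∃ u x, H.Adj u x ∧ ∀ w, H.Adj u w → w = x := by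
  classical
  set N := Fintype.card V with hN
  set P : ℕ → Prop := fun k => ∃ u v : V, ∃ p : H.Walk u v, p.IsPath ∧ p.length = k with hP
  have hP1 : P 1 := ⟨a, b, SimpleGraph.Walk.cons hab SimpleGraph.Walk.nil,
    by simp [SimpleGraph.Walk.cons_isPath_iff, hab.ne], by simp⟩
  have hbound : ∀ k, P k → k ≤ N := by
    rintro k ⟨u, v, p, hp, hl⟩
    exact hl ▸ hp.length_lt.le
  have h1N : 1 ≤ N := hbound 1 hP1
  set L := Nat.findGreatest P N with hL
  have hPL : P L := Nat.findGreatest_spec h1N hP1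
  have hL1 : 1 ≤ L := Nat.le_findGreatest h1N hP1
  obtain ⟨u, v, p, hp, hlen⟩ := hPL
  obtain ⟨z, hh, q, rfl⟩ : ∃ (z : V), ∃ (hh : H.Adj u z), ∃ (q : H.Walk z v),
      p = SimpleGraph.Walk.cons hh q := by
    cases p with
    | nil => simp only [SimpleGraph.Walk.length_nil] at hlen; omega
    | cons hh q => exact ⟨_, hh, q, rfl⟩
  have hq : q.IsPath := ((SimpleGraph.Walk.cons_isPath_iff _ _).mp hp).1
  have hu : u ∉ q.support := ((SimpleGraph.Walk.cons_isPath_iff _ _).mp hp).2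
  refine ⟨u, z, hh, ?_⟩
  intro w hw
  by_cases hmem : w ∈ (SimpleGraph.Walk.cons hh q).support
  · set r := (SimpleGraph.Walk.cons hh q).takeUntil w hmem with hr
    have hrpath : r.IsPath := hp.takeUntil hmem
    have hcyc := hac (SimpleGraph.Walk.cons hw r.reverse)
    have hdecomp : ¬(r.reverse.IsPath ∧ s(u, w) ∉ r.reverse.edges) := by
      simpa [SimpleGraph.Walk.cons_isCycle_iff] using hcyc
    have hedge : s(u, w) ∈ r.edges := by
      by_contra hne'
      exact hdecomp ⟨hrpath.reverse, by
        simpa [SimpleGraph.Walk.edges_reverse] using hne'⟩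
    have hsub := SimpleGraph.Walk.edges_takeUntil_subset (SimpleGraph.Walk.cons hh q) hmem
    have hmem2 : s(u, w) ∈ (SimpleGraph.Walk.cons hh q).edges := hsub hedge
    rw [SimpleGraph.Walk.edges_cons] at hmem2
    rcases List.mem_cons.mp hmem2 with h1 | h2
    · rcases Sym2.eq_iff.mp h1 with ⟨-, rfl⟩ | ⟨h3, h4⟩
      · rfl
      · exact (hw.ne h4.symm).elim
    · exact absurd (SimpleGraph.Walk.fst_mem_support_of_mem_edges q h2) hu
  · exfalso
    have hp' : (SimpleGraph.Walk.cons hw.symm (SimpleGraph.Walk.cons hh q)).IsPath :=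
      (SimpleGraph.Walk.cons_isPath_iff _ _).mpr ⟨hp, hmem⟩
    have hPk : P (L + 1) := ⟨_, _, _, hp', by simp [hlen]⟩
    exact Nat.findGreatest_is_greatest (Nat.lt_succ_self L) (hbound _ hPk) hPk

private lemma sum_split {n : ℕ} (H : SimpleGraph (Fin n)) [DecidableRel H.Adj] (i : Fin n)
    (f : Fin n → ℝ) (hf : ∀ j, j ≠ i → ¬H.Adj i j → f j = 0) :
    ∑ j, f j = f i + ∑ j ∈ H.neighborFinset i, f j := by
  have hni : i ∉ H.neighborFinset i := by
    simp [SimpleGraph.mem_neighborFinset]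
  rw [← Finset.sum_insert hni]
  refine (Finset.sum_subset (Finset.subset_univ _) ?_).symm
  intro j _ hj
  simp only [Finset.mem_insert, SimpleGraph.mem_neighborFinset] at hj
  push_neg at hj
  exact hf j hj.1 hj.2

private lemma sum_adj_pairs {n : ℕ} (H : SimpleGraph (Fin n)) [DecidableRel H.Adj]
    (F : Fin n → Fin n → ℝ) :
    ∑ i, ∑ j ∈ H.neighborFinset i, F i j =
      ∑ p ∈ Finset.univ.filter (fun p : Fin n × Fin n => p.1 < p.2 ∧ H.Adj p.1 p.2),
        (F p.1 p.2 + F p.2 p.1) := by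
  classical
  have h1 : ∑ i, ∑ j ∈ H.neighborFinset i, F i j =
      ∑ p ∈ Finset.univ.filter (fun p : Fin n × Fin n => H.Adj p.1 p.2), F p.1 p.2 := by
    rw [Finset.sum_filter, Fintype.sum_prod_type]
    refine Finset.sum_congr rfl fun i _ => ?_
    rw [SimpleGraph.neighborFinset_eq_filter, Finset.sum_filter]
  rw [h1]
  have h2 : Finset.univ.filter (fun p : Fin n × Fin n => H.Adj p.1 p.2) =
      Finset.univ.filter (fun p : Fin n × Fin n => p.1 < p.2 ∧ H.Adj p.1 p.2) ∪
      Finset.univ.filter (fun p : Fin n × Fin n => p.2 < p.1 ∧ H.Adj p.1 p.2) := by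
    ext p
    simp only [Finset.mem_filter, Finset.mem_union, Finset.mem_univ, true_and]
    constructor
    · intro h
      rcases lt_or_gt_of_ne h.ne with h' | h'
      · exact Or.inl ⟨h', h⟩
      · exact Or.inr ⟨h', h⟩
    · rintro (⟨-, h⟩ | ⟨-, h⟩) <;> exact h
  have hdisj : Disjoint
      (Finset.univ.filter (fun p : Fin n × Fin n => p.1 < p.2 ∧ H.Adj p.1 p.2))
      (Finset.univ.filter (fun p : Fin n × Fin n => p.2 < p.1 ∧ H.Adj p.1 p.2)) := by
    rw [Finset.disjoint_left]
    intro p hp hp'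
    simp only [Finset.mem_filter] at hp hp'
    exact absurd hp'.2.1 (not_lt.mpr hp.2.1.le)
  rw [h2, Finset.sum_union hdisj, Finset.sum_add_distrib]
  congr 1
  refine Finset.sum_nbij' (fun p : Fin n × Fin n => (p.2, p.1))
    (fun p : Fin n × Fin n => (p.2, p.1)) ?_ ?_ ?_ ?_ ?_
  · intro p hp
    simp only [Finset.mem_filter, Finset.mem_univ, true_and] at hp ⊢
    exact ⟨hp.1, hp.2.symm⟩
  · intro p hp
    simp only [Finset.mem_filter, Finset.mem_univ, true_and] at hp ⊢
    exact ⟨hp.1, hp.2.symm⟩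
  · intro p _; rfl
  · intro p _; rfl
  · intro p _; rfl

private lemma det_precM {n : ℕ} (c : Fin n → Fin n → ℝ) :
    ∀ (m : ℕ) (H : SimpleGraph (Fin n)) (inst : DecidableRel H.Adj),
      H.edgeFinset.card = m → H.IsAcyclic →
      (∀ i j, H.Adj i j → c i j = c j i) →
      (∀ i j, H.Adj i j → c i j ^ 2 ≠ 1) →
      (precM H c).det =
        ∏ p ∈ Finset.univ.filter (fun p : Fin n × Fin n => p.1 < p.2 ∧ H.Adj p.1 p.2),
          (1 - c p.1 p.2 ^ 2)⁻¹ := by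
  intro m
  induction m using Nat.strong_induction_on with
  | _ m ih =>
    intro H inst hcard hac hsym hne
    by_cases hadj : ∃ a b, H.Adj a b
    · obtain ⟨a, b, hab⟩ := hadj
      obtain ⟨u, x, hux, huniq⟩ := exists_leaf hac hab
      have hux' : u ≠ x := hux.ne
      have hxu : x ≠ u := hux.ne'
      have hcu2 : 1 - c u x ^ 2 ≠ 0 := by
        intro h
        exact hne u x hux (by linarith)
      have hNu : H.neighborFinset u = {x} := by
        ext w
        simp only [SimpleGraph.mem_neighborFinset, Finset.mem_singleton]
        exact ⟨huniq w, fun h => h ▸ hux⟩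
      have hAuu : precM H c u u = (1 - c u x ^ 2)⁻¹ := by
        simp only [precM, Matrix.of_apply, if_pos rfl, if_true, hNu, Finset.sum_singleton]
        field_simp
        ring
      have hAux : precM H c u x = -(c u x) / (1 - c u x ^ 2) := by
        simp [precM, hux, hux']
      have hAxu : precM H c x u = -(c u x) / (1 - c u x ^ 2) := by
        simp [precM, hux.symm, hxu, ← hsym u x hux]
      have hAuj : ∀ j, j ≠ u → j ≠ x → precM H c u j = 0 := by
        intro j h1 h2
        have hnadj : ¬ H.Adj u j := fun h => h2 (huniq j h)
        simp [precM, (Ne.symm h1 : ¬ u = j), hnadj]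
      -- the graph with the leaf edge removed
      letI inst' : DecidableRel (H.deleteEdges {s(u, x)}).Adj := fun a b =>
        decidable_of_iff (H.Adj a b ∧ ¬ s(a, b) = s(u, x))
          (by simp [SimpleGraph.deleteEdges_adj])
      have hH'adj : ∀ a b, (H.deleteEdges {s(u, x)}).Adj a b ↔
          H.Adj a b ∧ ¬(a = u ∧ b = x) ∧ ¬(a = x ∧ b = u) := by
        intro a b
        simp only [SimpleGraph.deleteEdges_adj, Set.mem_singleton_iff, Sym2.eq_iff]
        tauto
      have hH'u : ∀ w, ¬ (H.deleteEdges {s(u, x)}).Adj u w := by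
        intro w h
        rw [hH'adj] at h
        exact h.2.1 ⟨rfl, huniq w h.1⟩
      have hN'u : (H.deleteEdges {s(u, x)}).neighborFinset u = ∅ := by
        ext w
        simp only [SimpleGraph.mem_neighborFinset, Finset.notMem_empty, iff_false]
        exact hH'u w
      have hux2 : u ∉ (H.deleteEdges {s(u, x)}).neighborFinset x := by
        simp only [SimpleGraph.mem_neighborFinset]
        intro h
        rw [hH'adj] at h
        exact h.2.2 ⟨rfl, rfl⟩
      have hNx : H.neighborFinset x = insert u ((H.deleteEdges {s(u, x)}).neighborFinset x) := by
        ext w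
        simp only [SimpleGraph.mem_neighborFinset, Finset.mem_insert]
        rw [hH'adj]
        constructor
        · intro h
          by_cases hwu : w = u
          · exact Or.inl hwu
          · refine Or.inr ⟨h, fun hc => hxu hc.1, fun hc => hwu hc.2⟩
        · rintro (rfl | ⟨h, -, -⟩)
          · exact hux.symm
          · exact h
      have hN'i : ∀ i, i ≠ u → i ≠ x →
          (H.deleteEdges {s(u, x)}).neighborFinset i = H.neighborFinset i := by
        intro i hiu hix
        ext w
        simp only [SimpleGraph.mem_neighborFinset]
        rw [hH'adj]
        constructor
        · exact fun h => h.1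
        · intro h
          exact ⟨h, fun hc => hiu hc.1, fun hc => hix hc.1⟩
      have hA'u : ∀ j, precM (H.deleteEdges {s(u, x)}) c u j = if u = j then 1 else 0 := by
        intro j
        by_cases h : u = j
        · subst h
          simp [precM, hN'u]
        · simp only [precM, Matrix.of_apply, if_neg h, if_neg (hH'u j)]
      -- row and column operations
      have hdet1 : (((precM H c).updateRow x (precM H c x + c u x • precM H c u))).det
          = (precM H c).det :=
        Matrix.det_updateRow_add_smul_self _ hxu _
      have hdet2 : ((((precM H c).updateRow x (precM H c x + c u x • precM H c u)).updateCol x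
          (fun i => ((precM H c).updateRow x (precM H c x + c u x • precM H c u)) i x
            + c u x • ((precM H c).updateRow x (precM H c x + c u x • precM H c u)) i u))).det
          = (((precM H c).updateRow x (precM H c x + c u x • precM H c u))).det :=
        Matrix.det_updateCol_add_smul_self _ hxu _
      have hM2eq : (((precM H c).updateRow x (precM H c x + c u x • precM H c u)).updateCol x
          (fun i => ((precM H c).updateRow x (precM H c x + c u x • precM H c u)) i x
            + c u x • ((precM H c).updateRow x (precM H c x + c u x • precM H c u)) i u))
          = (precM (H.deleteEdges {s(u, x)}) c).updateRow u
              ((1 - c u x ^ 2)⁻¹ • precM (H.deleteEdges {s(u, x)}) c u) := by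
        ext i j
        simp only [Matrix.updateCol_apply, Matrix.updateRow_apply, Pi.add_apply,
          Pi.smul_apply, smul_eq_mul]
        by_cases hiu : i = u
        · rw [hiu]
          simp only [if_neg hux', eq_self_iff_true, if_true]
          by_cases hjx : j = x
          · rw [if_pos hjx, hjx, hAux, hAuu, hA'u x, if_neg hux']
            field_simp
            ring
          · rw [if_neg hjx, hA'u j]
            by_cases hju : u = j
            · rw [if_pos hju, mul_one, ← hju, hAuu]
            · rw [if_neg hju, mul_zero]
              exact hAuj j (fun h => hju h.symm) hjx
        · by_cases hix : i = x
          · rw [hix]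
            simp only [eq_self_iff_true, if_true, if_neg hxu]
            have hAxx : precM H c x x
                = precM (H.deleteEdges {s(u, x)}) c x x + c u x ^ 2 / (1 - c u x ^ 2) := by
              have h1 : precM H c x x
                  = 1 + ∑ k ∈ H.neighborFinset x, c x k ^ 2 / (1 - c x k ^ 2) := by
                simp [precM]
              have h2 : precM (H.deleteEdges {s(u, x)}) c x x
                  = 1 + ∑ k ∈ (H.deleteEdges {s(u, x)}).neighborFinset x,
                      c x k ^ 2 / (1 - c x k ^ 2) := by
                simp [precM]
              rw [h1, h2, hNx, Finset.sum_insert hux2, ← hsym u x hux]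
              ring
            by_cases hjx : j = x
            · rw [if_pos hjx, hjx, hAxx, hAux, hAxu, hAuu]
              field_simp
              ring
            · rw [if_neg hjx]
              by_cases hju : j = u
              · rw [hju, hAxu, hAuu]
                have hnadj : ¬ (H.deleteEdges {s(u, x)}).Adj x u := by
                  rw [hH'adj]
                  rintro ⟨-, -, h⟩
                  exact h ⟨rfl, rfl⟩
                have : precM (H.deleteEdges {s(u, x)}) c x u = 0 := by
                  simp [precM, hxu, hnadj]
                rw [this]
                field_simp
                ring
              · rw [hAuj j hju hjx, mul_zero, add_zero]
                have hiff : (H.deleteEdges {s(u, x)}).Adj x j ↔ H.Adj x j := by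
                  rw [hH'adj]
                  exact ⟨fun h => h.1, fun h => ⟨h, fun hc => hxu hc.1, fun hc => hju hc.2⟩⟩
                simp only [precM, Matrix.of_apply, if_neg (Ne.symm hjx : ¬ x = j), hiff]
          · simp only [if_neg hix, if_neg hiu]
            have hAiu : precM H c i u = 0 := by
              have hnadj : ¬ H.Adj i u := fun h => hix (huniq i h.symm)
              simp [precM, hiu, hnadj]
            by_cases hjx : j = x
            · rw [if_pos hjx, hjx, hAiu, mul_zero, add_zero]
              have hiff : (H.deleteEdges {s(u, x)}).Adj i x ↔ H.Adj i x := by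
                rw [hH'adj]
                exact ⟨fun h => h.1, fun h => ⟨h, fun hc => hiu hc.1, fun hc => hix hc.1⟩⟩
              simp only [precM, Matrix.of_apply, if_neg hix, hiff]
            · rw [if_neg hjx]
              by_cases hij : i = j
              · simp only [precM, Matrix.of_apply, if_pos hij]
                rw [hN'i i hiu hix]
              · have hiff : (H.deleteEdges {s(u, x)}).Adj i j ↔ H.Adj i j := by
                  rw [hH'adj]
                  exact ⟨fun h => h.1, fun h => ⟨h, fun hc => hiu hc.1, fun hc => hix hc.1⟩⟩
                simp only [precM, Matrix.of_apply, if_neg hij, hiff]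
      have hdet3 : (precM H c).det
          = (1 - c u x ^ 2)⁻¹ * (precM (H.deleteEdges {s(u, x)}) c).det := by
        rw [← hdet1, ← hdet2, hM2eq, Matrix.det_updateRow_smul, Matrix.updateRow_eq_self]
      -- cardinality and acyclicity of the reduced graph
      have hmemE : s(u, x) ∈ H.edgeFinset := by
        rw [SimpleGraph.mem_edgeFinset, SimpleGraph.mem_edgeSet]
        exact hux
      have hE' : (H.deleteEdges {s(u, x)}).edgeFinset = H.edgeFinset.erase s(u, x) := by
        ext e
        simp only [SimpleGraph.mem_edgeFinset, SimpleGraph.edgeSet_deleteEdges,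
          Set.mem_diff, Set.mem_singleton_iff, Finset.mem_erase]
        tauto
      have hcard' : (H.deleteEdges {s(u, x)}).edgeFinset.card = m - 1 := by
        rw [hE', Finset.card_erase_of_mem hmemE, hcard]
      have hm1 : 1 ≤ m := by
        rw [← hcard]
        exact Finset.card_pos.mpr ⟨_, hmemE⟩
      have hac' : (H.deleteEdges {s(u, x)}).IsAcyclic := fun v w hcy =>
        hac (w.mapLe (SimpleGraph.deleteEdges_le _)) (hcy.mapLe _)
      have hsym' : ∀ i j, (H.deleteEdges {s(u, x)}).Adj i j → c i j = c j i :=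
        fun i j h => hsym i j ((hH'adj i j).mp h).1
      have hne' : ∀ i j, (H.deleteEdges {s(u, x)}).Adj i j → c i j ^ 2 ≠ 1 :=
        fun i j h => hne i j ((hH'adj i j).mp h).1
      have ihres := ih (m - 1) (by omega) (H.deleteEdges {s(u, x)}) inst' hcard' hac' hsym' hne'
      -- the edge sets as pair sets
      have hq1 : (if u < x then (u, x) else (x, u)).1 < (if u < x then (u, x) else (x, u)).2 := by
        by_cases h : u < x
        · simp [h]
        · simp only [if_neg h]
          exact lt_of_le_of_ne (not_lt.mp h) hxu
      have hq2 : H.Adj (if u < x then (u, x) else (x, u)).1 (if u < x then (u, x) else (x, u)).2 := by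
        by_cases h : u < x
        · simpa [h] using hux
        · simpa [h] using hux.symm
      have hq3 : c (if u < x then (u, x) else (x, u)).1 (if u < x then (u, x) else (x, u)).2
          = c u x := by
        by_cases h : u < x
        · simp [h]
        · simp only [if_neg h]
          exact (hsym u x hux).symm
      have hqnot : ¬ (H.deleteEdges {s(u, x)}).Adj (if u < x then (u, x) else (x, u)).1
          (if u < x then (u, x) else (x, u)).2 := by
        by_cases h : u < x
        · simp only [if_pos h]
          rw [hH'adj]
          rintro ⟨-, h2, -⟩
          exact h2 ⟨rfl, rfl⟩
        · simp only [if_neg h]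
          rw [hH'adj]
          rintro ⟨-, -, h2⟩
          exact h2 ⟨rfl, rfl⟩
      have hqnotmem : (if u < x then (u, x) else (x, u)) ∉ Finset.univ.filter
          (fun p : Fin n × Fin n => p.1 < p.2 ∧ (H.deleteEdges {s(u, x)}).Adj p.1 p.2) := by
        simp only [Finset.mem_filter, Finset.mem_univ, true_and, not_and]
        exact fun _ => hqnot
      have hsets : Finset.univ.filter (fun p : Fin n × Fin n => p.1 < p.2 ∧ H.Adj p.1 p.2)
          = insert (if u < x then (u, x) else (x, u)) (Finset.univ.filter
            (fun p : Fin n × Fin n => p.1 < p.2 ∧ (H.deleteEdges {s(u, x)}).Adj p.1 p.2)) := by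
        ext p
        simp only [Finset.mem_filter, Finset.mem_insert, Finset.mem_univ, true_and]
        rw [hH'adj]
        constructor
        · rintro ⟨hlt, hadjp⟩
          by_cases hpu : p.1 = u ∧ p.2 = x
          · left
            have hltux : u < x := by rw [← hpu.1, ← hpu.2]; exact hlt
            rw [if_pos hltux]
            exact Prod.ext hpu.1 hpu.2
          · by_cases hpx : p.1 = x ∧ p.2 = u
            · left
              have hltxu : ¬ u < x := by
                rw [← hpx.2, ← hpx.1]
                exact not_lt.mpr hlt.le
              rw [if_neg hltxu]
              exact Prod.ext hpx.1 hpx.2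
            · exact Or.inr ⟨hlt, hadjp, hpu, hpx⟩
        · rintro (rfl | ⟨hlt, hadjp, -, -⟩)
          · exact ⟨hq1, hq2⟩
          · exact ⟨hlt, hadjp⟩
      rw [hdet3, ihres, hsets, Finset.prod_insert hqnotmem, hq3]
    · -- no edges
      push_neg at hadj
      have hfilter : Finset.univ.filter (fun p : Fin n × Fin n => p.1 < p.2 ∧ H.Adj p.1 p.2)
          = ∅ := by
        ext p
        simp only [Finset.mem_filter, Finset.mem_univ, true_and, Finset.notMem_empty,
          iff_false, not_and]
        exact fun _ => hadj p.1 p.2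
      have hone : precM H c = 1 := by
        ext i j
        by_cases h : i = j
        · subst h
          have : H.neighborFinset i = ∅ := by
            ext w
            simp only [SimpleGraph.mem_neighborFinset, Finset.notMem_empty, iff_false]
            exact hadj i w
          simp [precM, this]
        · simp [precM, h, hadj i j]
      rw [hone, Matrix.det_one, hfilter, Finset.prod_empty]

/-- Density of the centered multivariate Gaussian with covariance matrix `S`. -/
noncomputable def mvgpdf {n : ℕ} (S : Matrix (Fin n) (Fin n) ℝ) (y : Fin n → ℝ) : ℝ :=
  (1 / Real.sqrt ((2 * Real.pi) ^ n * S.det)) *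
    Real.exp (-(1 / 2) * (y ⬝ᵥ (S⁻¹ *ᵥ y)))

/-- Log-likelihood ratio of i.i.d. N(0,σ₀²) against a GMRF with acyclic dependency
graph, unit-variance σ₁² and edge correlations g i j. -/
theorem stmt_14 {n : ℕ} (G : SimpleGraph (Fin n)) [DecidableRel G.Adj]
    (hac : G.IsAcyclic)
    (S : Matrix (Fin n) (Fin n) ℝ) (hsymm : S.IsSymm) (hpd : S.PosDef)
    (σ₀ σ₁ M : ℝ) (h0 : 0 < σ₀) (h1 : 0 < σ₁) (hM : M < 1)
    (g : Fin n → Fin n → ℝ)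
    (hdiag : ∀ i, S i i = σ₁ ^ 2)
    (hedge : ∀ i j, G.Adj i j → S i j = σ₁ ^ 2 * g i j ∧ |g i j| ≤ M)
    (hzero : ∀ i j : Fin n, i ≠ j → ¬ G.Adj i j → S⁻¹ i j = 0)
    (hmarkov : ∀ i j k : Fin n, G.Adj i j → G.Adj i k → j ≠ k →
      S j k = S i j * S i k / S i i)
    (y : Fin n → ℝ) :
    Real.log (mvgpdf ((σ₀ ^ 2) • (1 : Matrix (Fin n) (Fin n) ℝ)) y / mvgpdf S y) =
      n * Real.log (σ₁ / σ₀) +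
      (1 / 2) * ((1 / σ₁ ^ 2 - 1 / σ₀ ^ 2) * ∑ i, y i ^ 2 +
        ∑ p ∈ Finset.univ.filter (fun p : Fin n × Fin n => p.1 < p.2 ∧ G.Adj p.1 p.2),
          (Real.log (1 - g p.1 p.2 ^ 2) +
            (g p.1 p.2 ^ 2 / (1 - g p.1 p.2 ^ 2)) * (y p.1 ^ 2 + y p.2 ^ 2) / σ₁ ^ 2 -
            (2 * g p.1 p.2 / (1 - g p.1 p.2 ^ 2)) * (y p.1 * y p.2) / σ₁ ^ 2)) := by
  classical
  have hσ1 : (σ₁ : ℝ) ^ 2 ≠ 0 := pow_ne_zero 2 h1.ne'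
  have hσ0 : (σ₀ : ℝ) ^ 2 ≠ 0 := pow_ne_zero 2 h0.ne'
  have hσ1p : (0 : ℝ) < σ₁ ^ 2 := by positivity
  set g' : Fin n → Fin n → ℝ := fun i j => S i j / σ₁ ^ 2 with hg'
  have hSsym : ∀ a b : Fin n, S a b = S b a := fun a b => (hsymm.apply a b).symm
  have hg'symm : ∀ a b : Fin n, g' a b = g' b a := fun a b => by
    simp only [hg']
    rw [hSsym]
  have hg'edge : ∀ i j, G.Adj i j → g' i j = g i j := by
    intro i j h
    simp only [hg']
    rw [(hedge i j h).1]
    field_simp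
  have hg2 : ∀ i j, G.Adj i j → g i j ^ 2 < 1 := by
    intro i j h
    have h2 := (hedge i j h).2
    have h3 : (0 : ℝ) ≤ |g i j| := abs_nonneg _
    nlinarith [sq_abs (g i j)]
  have hne1 : ∀ i j, G.Adj i j → g' i j ^ 2 ≠ 1 := fun i j h => by
    rw [hg'edge i j h]; exact ne_of_lt (hg2 i j h)
  have hpos1 : ∀ i j, G.Adj i j → 0 < 1 - g' i j ^ 2 := fun i j h => by
    rw [hg'edge i j h]; linarith [hg2 i j h]
  have hdetSpos : 0 < S.det := hpd.det_pos
  have hdet0 : IsUnit S.det := by simp [isUnit_iff_ne_zero, hdetSpos.ne']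
  -- identify the inverse matrix
  have hmul : ∀ i k, ∑ j, S⁻¹ i j * S j k = (1 : Matrix (Fin n) (Fin n) ℝ) i k := by
    intro i k
    rw [← Matrix.mul_apply, Matrix.nonsing_inv_mul S hdet0]
  have hsplit : ∀ i k, ∑ j, S⁻¹ i j * S j k
      = S⁻¹ i i * S i k + ∑ j ∈ G.neighborFinset i, S⁻¹ i j * S j k := by
    intro i k
    exact sum_split G i _ (fun j hj hadj => by rw [hzero i j (Ne.symm hj) hadj, zero_mul])
  have he1 : ∀ i, S⁻¹ i i * σ₁ ^ 2 + ∑ j ∈ G.neighborFinset i, S⁻¹ i j * S i j = 1 := by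
    intro i
    have e1 := hmul i i
    rw [hsplit i i, Matrix.one_apply_eq, hdiag i] at e1
    rw [← e1]
    congr 1
    exact Finset.sum_congr rfl fun j _ => by rw [hSsym j i]
  have hoff : ∀ i k, G.Adj i k → S⁻¹ i k = -(g' i k) / (σ₁ ^ 2 * (1 - g' i k ^ 2)) := by
    intro i k hik
    have hk : k ∈ G.neighborFinset i := by rwa [SimpleGraph.mem_neighborFinset]
    have e2 := hmul i k
    rw [hsplit i k, Matrix.one_apply_ne hik.ne] at e2
    rw [← Finset.add_sum_erase _ _ hk] at e2
    have hmar : ∀ j ∈ (G.neighborFinset i).erase k,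
        S⁻¹ i j * S j k = (S⁻¹ i j * S i j) * (S i k / σ₁ ^ 2) := by
      intro j hj
      obtain ⟨hjk, hjN⟩ := Finset.mem_erase.mp hj
      have hij : G.Adj i j := by rwa [SimpleGraph.mem_neighborFinset] at hjN
      rw [hmarkov i j k hij hik hjk, hdiag i]
      ring
    rw [Finset.sum_congr rfl hmar, ← Finset.sum_mul, Finset.sum_erase_eq_sub hk,
      hdiag k] at e2
    have e1 := he1 i
    set Bik := S⁻¹ i k with hBik
    set Bii := S⁻¹ i i with hBii
    set T' := ∑ j ∈ G.neighborFinset i, S⁻¹ i j * S i j with hT'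
    have key : Bik * (σ₁ ^ 2 * σ₁ ^ 2 - S i k * S i k) = -(S i k) := by
      field_simp at e2
      linear_combination e2 - S i k * e1
    have hd2 : σ₁ ^ 2 * (1 - g' i k ^ 2) ≠ 0 :=
      (mul_pos hσ1p (hpos1 i k hik)).ne'
    rw [eq_div_iff hd2]
    have hexp : σ₁ ^ 2 * (1 - g' i k ^ 2) = (σ₁ ^ 2 * σ₁ ^ 2 - S i k * S i k) / σ₁ ^ 2 := by
      simp only [hg']
      field_simp
    rw [hexp]
    simp only [hg']
    field_simp
    linear_combination key
  have hdiagB : ∀ i, S⁻¹ i i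
      = (σ₁ ^ 2)⁻¹ * (1 + ∑ j ∈ G.neighborFinset i, g' i j ^ 2 / (1 - g' i j ^ 2)) := by
    intro i
    have e1 := he1 i
    have hterm : ∀ j ∈ G.neighborFinset i,
        S⁻¹ i j * S i j = -(g' i j ^ 2 / (1 - g' i j ^ 2)) := by
      intro j hj
      have hij : G.Adj i j := by rwa [SimpleGraph.mem_neighborFinset] at hj
      have hSg : S i j = σ₁ ^ 2 * g' i j := by
        simp only [hg']
        field_simp
      rw [hoff i j hij, hSg]
      have hne2 : 1 - g' i j ^ 2 ≠ 0 := (hpos1 i j hij).ne'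
      field_simp
    rw [Finset.sum_congr rfl hterm] at e1
    rw [Finset.sum_neg_distrib] at e1
    set Bii := S⁻¹ i i with hBii
    field_simp
    linarith [e1]
  have hBA : S⁻¹ = (σ₁ ^ 2)⁻¹ • precM G g' := by
    ext i k
    simp only [Matrix.smul_apply, smul_eq_mul]
    by_cases hik : i = k
    · rw [← hik, hdiagB i]
      simp [precM]
    · by_cases hadjik : G.Adj i k
      · rw [hoff i k hadjik]
        have h12 : precM G g' i k = -(g' i k) / (1 - g' i k ^ 2) := by
          simp [precM, hik, hadjik]
        rw [h12]
        have hne2 : 1 - g' i k ^ 2 ≠ 0 := (hpos1 i k hadjik).ne'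
        field_simp
      · rw [hzero i k hik hadjik]
        have h12 : precM G g' i k = 0 := by simp [precM, hik, hadjik]
        rw [h12, mul_zero]
  -- the determinant
  have hdetP : (precM G g').det
      = ∏ p ∈ Finset.univ.filter (fun p : Fin n × Fin n => p.1 < p.2 ∧ G.Adj p.1 p.2),
          (1 - g' p.1 p.2 ^ 2)⁻¹ :=
    det_precM g' _ G inferInstance rfl hac (fun i j _ => hg'symm i j) hne1
  have hdetS : S.det = (σ₁ ^ 2) ^ n
      * ∏ p ∈ Finset.univ.filter (fun p : Fin n × Fin n => p.1 < p.2 ∧ G.Adj p.1 p.2),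
          (1 - g' p.1 p.2 ^ 2) := by
    have h6 : S⁻¹.det = S.det⁻¹ := by
      rw [Matrix.det_nonsing_inv, Ring.inverse_eq_inv]
    have h5 : S⁻¹.det = ((σ₁ ^ 2)⁻¹) ^ n * (precM G g').det := by
      rw [hBA, Matrix.det_smul, Fintype.card_fin]
    rw [← inv_inv S.det, ← h6, h5, hdetP]
    rw [mul_inv, ← Finset.prod_inv_distrib]
    simp [inv_pow]
  have hprodpos : 0 < ∏ p ∈ Finset.univ.filter
      (fun p : Fin n × Fin n => p.1 < p.2 ∧ G.Adj p.1 p.2), (1 - g' p.1 p.2 ^ 2) :=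
    Finset.prod_pos fun p hp => hpos1 p.1 p.2 (Finset.mem_filter.mp hp).2.2
  -- the quadratic form
  have hQ1 : y ⬝ᵥ (S⁻¹ *ᵥ y) = (σ₁ ^ 2)⁻¹ * ((∑ i, y i ^ 2)
      + ∑ p ∈ Finset.univ.filter (fun p : Fin n × Fin n => p.1 < p.2 ∧ G.Adj p.1 p.2),
          ((g' p.1 p.2 ^ 2 / (1 - g' p.1 p.2 ^ 2)) * (y p.1 ^ 2 + y p.2 ^ 2)
            - 2 * g' p.1 p.2 / (1 - g' p.1 p.2 ^ 2) * (y p.1 * y p.2))) := by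
    rw [hBA, Matrix.smul_mulVec, dotProduct_smul, smul_eq_mul]
    congr 1
    have hdot : y ⬝ᵥ (precM G g' *ᵥ y) = ∑ i, ∑ j, y i * (precM G g' i j * y j) := by
      simp [dotProduct, Matrix.mulVec, Finset.mul_sum]
    rw [hdot]
    have hinner : ∀ i, ∑ j, y i * (precM G g' i j * y j)
        = y i ^ 2 * precM G g' i i + ∑ j ∈ G.neighborFinset i, y i * (precM G g' i j * y j) := by
      intro i
      rw [sum_split G i _ (fun j hj hadj => by
        have hij : ¬ i = j := fun h => hj h.symm
        have : precM G g' i j = 0 := by simp [precM, hij, hadj]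
        rw [this, zero_mul, mul_zero])]
      congr 1
      ring
    rw [Finset.sum_congr rfl (fun i _ => hinner i), Finset.sum_add_distrib]
    have hPii : ∀ i, precM G g' i i
        = 1 + ∑ j ∈ G.neighborFinset i, g' i j ^ 2 / (1 - g' i j ^ 2) := fun i => by
      simp [precM]
    have hfirst : ∑ i, y i ^ 2 * precM G g' i i = (∑ i, y i ^ 2)
        + ∑ p ∈ Finset.univ.filter (fun p : Fin n × Fin n => p.1 < p.2 ∧ G.Adj p.1 p.2),
            (g' p.1 p.2 ^ 2 / (1 - g' p.1 p.2 ^ 2) * y p.1 ^ 2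
              + g' p.2 p.1 ^ 2 / (1 - g' p.2 p.1 ^ 2) * y p.2 ^ 2) := by
      have hstep : ∀ i, y i ^ 2 * precM G g' i i
          = y i ^ 2 + ∑ j ∈ G.neighborFinset i, g' i j ^ 2 / (1 - g' i j ^ 2) * y i ^ 2 := by
        intro i
        rw [hPii i, mul_add, mul_one, Finset.mul_sum]
        congr 1
        exact Finset.sum_congr rfl fun j _ => by ring
      rw [Finset.sum_congr rfl (fun i _ => hstep i), Finset.sum_add_distrib,
        sum_adj_pairs G (fun i j => g' i j ^ 2 / (1 - g' i j ^ 2) * y i ^ 2)]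
    have hsecond : ∑ i, ∑ j ∈ G.neighborFinset i, y i * (precM G g' i j * y j)
        = ∑ p ∈ Finset.univ.filter (fun p : Fin n × Fin n => p.1 < p.2 ∧ G.Adj p.1 p.2),
            (-(2 * g' p.1 p.2 / (1 - g' p.1 p.2 ^ 2) * (y p.1 * y p.2))) := by
      rw [sum_adj_pairs G (fun i j => y i * (precM G g' i j * y j))]
      refine Finset.sum_congr rfl fun p hp => ?_
      have hadjp : G.Adj p.1 p.2 := (Finset.mem_filter.mp hp).2.2
      have h12 : precM G g' p.1 p.2 = -(g' p.1 p.2) / (1 - g' p.1 p.2 ^ 2) := by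
        simp [precM, hadjp.ne, hadjp]
      have h21 : precM G g' p.2 p.1 = -(g' p.1 p.2) / (1 - g' p.1 p.2 ^ 2) := by
        have : precM G g' p.2 p.1 = -(g' p.2 p.1) / (1 - g' p.2 p.1 ^ 2) := by
          simp [precM, hadjp.ne', hadjp.symm]
        rw [this, hg'symm p.2 p.1]
      rw [h12, h21]
      ring
    rw [hfirst, hsecond, add_assoc, ← Finset.sum_add_distrib]
    congr 1
    refine Finset.sum_congr rfl fun p hp => ?_
    rw [hg'symm p.2 p.1]
    ring
  -- scalar matrix facts
  have hinv0 : ((σ₀ ^ 2) • (1 : Matrix (Fin n) (Fin n) ℝ))⁻¹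
      = (σ₀ ^ 2)⁻¹ • (1 : Matrix (Fin n) (Fin n) ℝ) := by
    apply Matrix.inv_eq_right_inv
    rw [Matrix.smul_mul, Matrix.mul_smul, smul_smul, one_mul, mul_inv_cancel₀ hσ0, one_smul]
  have hdet0' : ((σ₀ ^ 2) • (1 : Matrix (Fin n) (Fin n) ℝ)).det = (σ₀ ^ 2) ^ n := by
    rw [Matrix.det_smul, Matrix.det_one, mul_one, Fintype.card_fin]
  have hQ0 : y ⬝ᵥ (((σ₀ ^ 2) • (1 : Matrix (Fin n) (Fin n) ℝ))⁻¹ *ᵥ y)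
      = (σ₀ ^ 2)⁻¹ * ∑ i, y i ^ 2 := by
    rw [hinv0, Matrix.smul_mulVec, Matrix.one_mulVec, dotProduct_smul, smul_eq_mul]
    congr 1
    simp [dotProduct]
    exact Finset.sum_congr rfl fun i _ => by ring
  -- positivity
  have h2pi : (0 : ℝ) < 2 * Real.pi := by positivity
  have hD1 : (0 : ℝ) < (2 * Real.pi) ^ n * S.det := mul_pos (pow_pos h2pi n) hdetSpos
  have hD0 : (0 : ℝ) < (2 * Real.pi) ^ n * ((σ₀ ^ 2) • (1 : Matrix (Fin n) (Fin n) ℝ)).det := by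
    rw [hdet0']
    positivity
  -- log computation
  simp only [mvgpdf]
  have hne1' : (1 / Real.sqrt ((2 * Real.pi) ^ n * S.det))
      * Real.exp (-(1 / 2) * (y ⬝ᵥ (S⁻¹ *ᵥ y))) ≠ 0 :=
    (mul_pos (div_pos one_pos (Real.sqrt_pos.mpr hD1)) (Real.exp_pos _)).ne'
  have hne0' : (1 / Real.sqrt ((2 * Real.pi) ^ n * ((σ₀ ^ 2) • (1 : Matrix (Fin n) (Fin n) ℝ)).det))
      * Real.exp (-(1 / 2) * (y ⬝ᵥ (((σ₀ ^ 2) • (1 : Matrix (Fin n) (Fin n) ℝ))⁻¹ *ᵥ y))) ≠ 0 :=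
    (mul_pos (div_pos one_pos (Real.sqrt_pos.mpr hD0)) (Real.exp_pos _)).ne'
  rw [Real.log_div hne0' hne1',
    Real.log_mul (by positivity) (Real.exp_ne_zero _),
    Real.log_mul (by positivity) (Real.exp_ne_zero _),
    Real.log_exp, Real.log_exp,
    one_div (Real.sqrt ((2 * Real.pi) ^ n * ((σ₀ ^ 2) • (1 : Matrix (Fin n) (Fin n) ℝ)).det)),
    one_div (Real.sqrt ((2 * Real.pi) ^ n * S.det)), Real.log_inv, Real.log_inv,
    Real.log_sqrt hD0.le, Real.log_sqrt hD1.le, hdet0', hQ0, hQ1, hdetS]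
  rw [Real.log_mul (by positivity) (by positivity),
    Real.log_mul (by positivity) (by positivity),
    Real.log_mul (by positivity) hprodpos.ne',
    Real.log_prod (fun p hp => (hpos1 p.1 p.2 (Finset.mem_filter.mp hp).2.2).ne'),
    Real.log_pow, Real.log_pow, Real.log_pow, Real.log_div h1.ne' h0.ne']
  -- convert the g' sums to g sums
  have hsumlog : ∑ p ∈ Finset.univ.filter (fun p : Fin n × Fin n => p.1 < p.2 ∧ G.Adj p.1 p.2),
      Real.log (1 - g' p.1 p.2 ^ 2)
      = ∑ p ∈ Finset.univ.filter (fun p : Fin n × Fin n => p.1 < p.2 ∧ G.Adj p.1 p.2),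
        Real.log (1 - g p.1 p.2 ^ 2) :=
    Finset.sum_congr rfl fun p hp => by
      rw [hg'edge p.1 p.2 (Finset.mem_filter.mp hp).2.2]
  have hsumq : ∑ p ∈ Finset.univ.filter (fun p : Fin n × Fin n => p.1 < p.2 ∧ G.Adj p.1 p.2),
      ((g' p.1 p.2 ^ 2 / (1 - g' p.1 p.2 ^ 2)) * (y p.1 ^ 2 + y p.2 ^ 2)
        - 2 * g' p.1 p.2 / (1 - g' p.1 p.2 ^ 2) * (y p.1 * y p.2))
      = ∑ p ∈ Finset.univ.filter (fun p : Fin n × Fin n => p.1 < p.2 ∧ G.Adj p.1 p.2),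
        ((g p.1 p.2 ^ 2 / (1 - g p.1 p.2 ^ 2)) * (y p.1 ^ 2 + y p.2 ^ 2)
          - 2 * g p.1 p.2 / (1 - g p.1 p.2 ^ 2) * (y p.1 * y p.2)) :=
    Finset.sum_congr rfl fun p hp => by
      rw [hg'edge p.1 p.2 (Finset.mem_filter.mp hp).2.2]
  rw [hsumlog, hsumq]
  -- split the target edge sum
  have htarget : ∑ p ∈ Finset.univ.filter (fun p : Fin n × Fin n => p.1 < p.2 ∧ G.Adj p.1 p.2),
      (Real.log (1 - g p.1 p.2 ^ 2) +
        (g p.1 p.2 ^ 2 / (1 - g p.1 p.2 ^ 2)) * (y p.1 ^ 2 + y p.2 ^ 2) / σ₁ ^ 2 -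
        (2 * g p.1 p.2 / (1 - g p.1 p.2 ^ 2)) * (y p.1 * y p.2) / σ₁ ^ 2)
      = (∑ p ∈ Finset.univ.filter (fun p : Fin n × Fin n => p.1 < p.2 ∧ G.Adj p.1 p.2),
          Real.log (1 - g p.1 p.2 ^ 2))
        + (σ₁ ^ 2)⁻¹ * ∑ p ∈ Finset.univ.filter
            (fun p : Fin n × Fin n => p.1 < p.2 ∧ G.Adj p.1 p.2),
          ((g p.1 p.2 ^ 2 / (1 - g p.1 p.2 ^ 2)) * (y p.1 ^ 2 + y p.2 ^ 2)
            - 2 * g p.1 p.2 / (1 - g p.1 p.2 ^ 2) * (y p.1 * y p.2)) := by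
    rw [Finset.mul_sum, ← Finset.sum_add_distrib]
    refine Finset.sum_congr rfl fun p hp => ?_
    ring
  rw [htarget]
  simp only [Real.log_pow]
  push_cast
  ring
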